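/- Under the constant control u = 0, starting from a point (S₁, S₂⁰) in D with S₂⁰ > S̲₂ > 0, the second coordinate S₂(t), which solves Ṡ₂ = −μ(S₂)(M − S₁ − S₂) with S₁ fixed, is strictly decreasing and reaches the value S̲₂ in finite time. -/

import Mathlib

open Set

/-- A function with `w 0 > 0` whose derivative satisfies `w' ≥ -K w` (on compact time
intervals, while `w ≥ 0`) stays positive on `[0, ∞)`. -/
lemma stays_pos (w w' : ℝ → ℝ)
    (hd : ∀ t ∈ Ici (0:ℝ), HasDerivAt w (w' t) t)
    (h0 : 0 < w 0)
    (hK : ∀ b > (0:ℝ), ∃ K ≥ (0:ℝ), ∀ t ∈ Icc (0:ℝ) b, 0 ≤ w t → -K * w t ≤ w' t) :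
    ∀ t ∈ Ici (0:ℝ), 0 < w t := by
  by_contra hcon
  push_neg at hcon
  obtain ⟨t₀, ht₀, hwt₀⟩ := hcon
  have cont : ∀ t ∈ Ici (0:ℝ), ContinuousAt w t := fun t ht => (hd t ht).continuousAt
  have contOn : ContinuousOn w (Ici 0) := fun t ht => (cont t ht).continuousWithinAt
  -- the set of zeros of w in [0, t₀]
  set A : Set ℝ := Icc 0 t₀ ∩ w ⁻¹' {0} with hA
  have hcontI : ContinuousOn w (Icc 0 t₀) := contOn.mono (Icc_subset_Ici_self)
  have hAne : A.Nonempty := by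
    have : (0:ℝ) ∈ Icc (w t₀) (w 0) := ⟨hwt₀, le_of_lt h0⟩
    have := intermediate_value_Icc' ht₀ hcontI this
    obtain ⟨s, hs, hws⟩ := this
    exact ⟨s, hs, by simpa using hws⟩
  have hAclosed : IsClosed A := hcontI.preimage_isClosed_of_isClosed isClosed_Icc isClosed_singleton
  have hAbdd : BddBelow A := ⟨0, fun x hx => hx.1.1⟩
  set T := sInf A with hTdef
  have hTA : T ∈ A := hAclosed.csInf_mem hAne hAbdd
  have hT0 : 0 ≤ T := hTA.1.1
  have hwT : w T = 0 := hTA.2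
  have hTpos : 0 < T := by
    rcases lt_or_eq_of_le hT0 with h | h
    · exact h
    · exfalso; rw [← h] at hwT; linarith
  -- w > 0 on [0, T)
  have hwpos : ∀ t ∈ Ico (0:ℝ) T, 0 < w t := by
    intro t ⟨ht0, htT⟩
    by_contra hle
    push_neg at hle
    rcases lt_or_eq_of_le hle with h | h
    · -- w t < 0 : a zero below t < T, contradiction with sInf
      have hsub : Icc (0:ℝ) t ⊆ Icc 0 t₀ := Icc_subset_Icc le_rfl (le_trans (le_of_lt htT) hTA.1.2)
      have : (0:ℝ) ∈ Icc (w t) (w 0) := ⟨le_of_lt h, le_of_lt h0⟩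
      obtain ⟨s, hs, hws⟩ := intermediate_value_Icc' ht0 (hcontI.mono hsub) this
      have hsA : s ∈ A := ⟨hsub hs, by simpa using hws⟩
      have := csInf_le hAbdd hsA
      have : T ≤ t := le_trans this hs.2
      linarith
    · have hsA : t ∈ A := ⟨⟨ht0, le_trans (le_of_lt htT) hTA.1.2⟩, by simp [← h]⟩
      have := csInf_le hAbdd hsA
      linarith
  have hwnonneg : ∀ t ∈ Icc (0:ℝ) T, 0 ≤ w t := by
    intro t ⟨ht0, htT⟩
    rcases lt_or_eq_of_le htT with h | h
    · exact le_of_lt (hwpos t ⟨ht0, h⟩)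
    · rw [h, hwT]
  obtain ⟨K, hKnn, hKb⟩ := hK T hTpos
  -- F t = w t * exp (K t) is monotone on [0, T]
  set F : ℝ → ℝ := fun t => w t * Real.exp (K * t) with hF
  have hFd : ∀ t ∈ Ici (0:ℝ), HasDerivAt F (w' t * Real.exp (K * t) + w t * (Real.exp (K * t) * K)) t := by
    intro t ht
    have he : HasDerivAt (fun s => Real.exp (K * s)) (Real.exp (K * t) * K) t := by
      simpa using (((hasDerivAt_id t).const_mul K).exp)
    exact (hd t ht).mul he
  have hFc : ContinuousOn F (Icc 0 T) :=
    fun t ht => ((hFd t (Icc_subset_Ici_self ht)).continuousAt).continuousWithinAt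
  have hFdiff : DifferentiableOn ℝ F (interior (Icc 0 T)) := by
    intro t ht
    rw [interior_Icc] at ht
    exact ((hFd t (le_of_lt ht.1)).differentiableAt).differentiableWithinAt
  have hFmono : MonotoneOn F (Icc 0 T) := by
    apply monotoneOn_of_deriv_nonneg (convex_Icc 0 T) hFc hFdiff
    intro t ht
    rw [interior_Icc] at ht
    rw [(hFd t (le_of_lt ht.1)).deriv]
    have htI : t ∈ Icc (0:ℝ) T := ⟨le_of_lt ht.1, le_of_lt ht.2⟩
    have hw0 : 0 ≤ w t := hwnonneg t htI
    have := hKb t htI hw0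
    have hexp : 0 < Real.exp (K * t) := Real.exp_pos _
    nlinarith
  have h1 : F 0 ≤ F T := hFmono ⟨le_rfl, hT0⟩ ⟨hT0, le_rfl⟩ hT0
  have hF0 : F 0 = w 0 := by simp [hF]
  have hFT : F T = 0 := by simp [hF, hwT]
  linarith [h1, hF0 ▸ hFT ▸ h1]

/-- Under u = 0 with S₁ fixed, S₂ is strictly decreasing and reaches S̲₂ in finite time. -/
theorem stmt6 (M S₁ S₂0 uS₂ : ℝ) (μ S₂ : ℝ → ℝ)
    (hM : 0 < M) (hS₁ : 0 ≤ S₁) (hsum : 0 < S₁ + S₂0) (hsumM : S₁ + S₂0 < M)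
    (hμ_lip : LocallyLipschitz μ) (hμ_pos : ∀ x > (0:ℝ), 0 < μ x) (hμ0 : μ 0 = 0)
    (huS₂ : 0 < uS₂) (huS₂' : uS₂ < S₂0)
    (hinit : S₂ 0 = S₂0)
    (hode : ∀ t ∈ Ici (0:ℝ), HasDerivAt S₂ (-μ (S₂ t) * (M - S₁ - S₂ t)) t) :
    StrictAntiOn S₂ (Ici 0) ∧ ∃ T : ℝ, 0 ≤ T ∧ S₂ T = uS₂ := by
  have hμc : Continuous μ := hμ_lip.continuous
  have contS : ContinuousOn S₂ (Ici 0) :=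
    fun t ht => ((hode t ht).continuousAt).continuousWithinAt
  have hS₂0pos : 0 < S₂0 := lt_trans huS₂ huS₂'
  -- Upper invariance: M - S₁ - S₂ t > 0
  have hupper : ∀ t ∈ Ici (0:ℝ), 0 < M - S₁ - S₂ t := by
    apply stays_pos (fun t => M - S₁ - S₂ t) (fun t => μ (S₂ t) * (M - S₁ - S₂ t))
    · intro t ht
      have := ((hode t ht).const_sub (M - S₁))
      exact this.congr_deriv (by ring)
    · simp only [hinit]; linarith
    · intro b hb
      have himg : IsCompact (S₂ '' Icc 0 b) :=
        isCompact_Icc.image_of_continuousOn (contS.mono Icc_subset_Ici_self)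
      obtain ⟨C, hC⟩ := himg.exists_bound_of_continuousOn hμc.continuousOn
      refine ⟨max C 0, le_max_right _ _, ?_⟩
      intro t ht hw
      have : |μ (S₂ t)| ≤ C := by
        simpa [Real.norm_eq_abs] using hC (S₂ t) ⟨t, ht, rfl⟩
      have hge : -(max C 0) ≤ μ (S₂ t) := by
        have := abs_le.mp this
        have : -C ≤ μ (S₂ t) := this.1
        have : -(max C 0) ≤ -C := neg_le_neg (le_max_left _ _)
        linarith [(abs_le.mp ‹|μ (S₂ t)| ≤ C›).1]
      exact mul_le_mul_of_nonneg_right hge hw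
  -- Lower invariance: S₂ t > 0
  have hlower : ∀ t ∈ Ici (0:ℝ), 0 < S₂ t := by
    apply stays_pos S₂ (fun t => -μ (S₂ t) * (M - S₁ - S₂ t)) hode
    · rw [hinit]; exact hS₂0pos
    · intro b hb
      -- Lipschitz bound near 0
      obtain ⟨K₀, U, hU, hlip⟩ := hμ_lip 0
      obtain ⟨δ, hδpos, hball⟩ := Metric.mem_nhds_iff.mp hU
      set δ' := δ / 2 with hδ'
      have hδ'pos : 0 < δ' := by positivity
      have hδ'U : ∀ x : ℝ, |x| ≤ δ' → x ∈ U := by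
        intro x hx
        apply hball
        simp only [Metric.mem_ball, Real.dist_eq, sub_zero]
        calc |x| ≤ δ' := hx
          _ < δ := by linarith
      have h0U : (0:ℝ) ∈ U := hδ'U 0 (by simp [le_of_lt hδ'pos])
      -- bound on compact image
      have himg : IsCompact (S₂ '' Icc 0 b) :=
        isCompact_Icc.image_of_continuousOn (contS.mono Icc_subset_Ici_self)
      obtain ⟨C, hC⟩ := himg.exists_bound_of_continuousOn hμc.continuousOn
      have hC0 : 0 ≤ C := by
        have := hC (S₂ 0) ⟨0, ⟨le_rfl, le_of_lt hb⟩, rfl⟩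
        have := norm_nonneg (μ (S₂ 0))
        linarith [hC (S₂ 0) ⟨0, ⟨le_rfl, le_of_lt hb⟩, rfl⟩]
      set L : ℝ := max (K₀ : ℝ) (C / δ') with hL
      have hLnn : 0 ≤ L := le_trans (K₀.coe_nonneg) (le_max_left _ _)
      refine ⟨L * M, mul_nonneg hLnn (le_of_lt hM), ?_⟩
      intro t ht hw
      -- need : -(L*M) * S₂ t ≤ -μ (S₂ t) * (M - S₁ - S₂ t)
      have hup : 0 < M - S₁ - S₂ t := hupper t ht.1
      have hμnn : 0 ≤ μ (S₂ t) := by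
        rcases lt_or_eq_of_le hw with h | h
        · exact le_of_lt (hμ_pos _ h)
        · rw [← h, hμ0]
      have hmub : μ (S₂ t) ≤ L * S₂ t := by
        rcases le_or_gt (S₂ t) δ' with h | h
        · -- use Lipschitz near 0
          have hxU : S₂ t ∈ U := hδ'U (S₂ t) (by rwa [abs_of_nonneg hw])
          have := hlip.dist_le_mul (S₂ t) hxU 0 h0U
          rw [hμ0, Real.dist_eq, Real.dist_eq, sub_zero, sub_zero,
            abs_of_nonneg hμnn, abs_of_nonneg hw] at this
          calc μ (S₂ t) ≤ (K₀ : ℝ) * S₂ t := this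
            _ ≤ L * S₂ t := mul_le_mul_of_nonneg_right (le_max_left _ _) hw
        · have hb1 : μ (S₂ t) ≤ C := by
            have := hC (S₂ t) ⟨t, ht, rfl⟩
            rw [Real.norm_eq_abs] at this
            exact le_trans (le_abs_self _) this
          have hb2 : C ≤ (C / δ') * S₂ t := by
            rw [div_mul_eq_mul_div, le_div_iff₀ hδ'pos]
            exact mul_le_mul_of_nonneg_left (le_of_lt h) hC0
          calc μ (S₂ t) ≤ (C / δ') * S₂ t := le_trans hb1 hb2
            _ ≤ L * S₂ t := mul_le_mul_of_nonneg_right (le_max_right _ _) hw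
      have hsub : M - S₁ - S₂ t ≤ M := by linarith
      have : μ (S₂ t) * (M - S₁ - S₂ t) ≤ (L * S₂ t) * M := by
        apply mul_le_mul hmub hsub (le_of_lt hup)
        exact mul_nonneg hLnn hw
      nlinarith
  -- Strict decrease
  have hanti : StrictAntiOn S₂ (Ici 0) := by
    apply strictAntiOn_of_deriv_neg (convex_Ici 0) contS
    intro t ht
    rw [interior_Ici] at ht
    have htI : t ∈ Ici (0:ℝ) := mem_Ici.mpr (le_of_lt (mem_Ioi.mp ht))
    rw [(hode t htI).deriv]
    have h1 := hlower t htI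
    have h2 := hupper t htI
    have := mul_pos (hμ_pos _ h1) h2
    linarith
  refine ⟨hanti, ?_⟩
  -- reach uS₂ in finite time
  have hreach : ∃ T : ℝ, 0 ≤ T ∧ S₂ T ≤ uS₂ := by
    by_contra hcon
    push_neg at hcon
    have hgt : ∀ t ∈ Ici (0:ℝ), uS₂ < S₂ t := fun t ht => hcon t ht
    have hle0 : ∀ t ∈ Ici (0:ℝ), S₂ t ≤ S₂0 := by
      intro t ht
      rcases lt_or_eq_of_le (mem_Ici.mp ht) with h | h
      · have := hanti (self_mem_Ici) ht h
        rw [hinit] at this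
        exact le_of_lt this
      · rw [← h, hinit]
    -- min of μ on [uS₂, S₂0]
    obtain ⟨x₀, hx₀J, hx₀min⟩ := isCompact_Icc.exists_isMinOn (nonempty_Icc.mpr (le_of_lt huS₂'))
      (hμc.continuousOn : ContinuousOn μ (Icc uS₂ S₂0))
    set m := μ x₀ with hm
    have hmpos : 0 < m := hμ_pos _ (lt_of_lt_of_le huS₂ hx₀J.1)
    set c := M - S₁ - S₂0 with hc
    have hcpos : 0 < c := by simp [hc]; linarith
    -- S₂ t + m*c*t is antitone on Ici 0
    set G : ℝ → ℝ := fun t => S₂ t + m * c * t with hG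
    have hGd : ∀ t ∈ Ici (0:ℝ), HasDerivAt G (-μ (S₂ t) * (M - S₁ - S₂ t) + m * c) t := by
      intro t ht
      have h2 : HasDerivAt (fun s => m * c * s) (m * c) t := by
        simpa using (hasDerivAt_id t).const_mul (m * c)
      exact (hode t ht).add h2
    have hGanti : AntitoneOn G (Ici 0) := by
      apply antitoneOn_of_deriv_nonpos (convex_Ici 0)
      · exact fun t ht => ((hGd t ht).continuousAt).continuousWithinAt
      · intro t ht
        rw [interior_Ici] at ht
        exact ((hGd t (mem_Ici.mpr (le_of_lt (mem_Ioi.mp ht)))).differentiableAt).differentiableWithinAt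
      · intro t ht
        rw [interior_Ici] at ht
        have htI : t ∈ Ici (0:ℝ) := mem_Ici.mpr (le_of_lt (mem_Ioi.mp ht))
        rw [(hGd t htI).deriv]
        have hJ : S₂ t ∈ Icc uS₂ S₂0 := ⟨le_of_lt (hgt t htI), hle0 t htI⟩
        have hμge : m ≤ μ (S₂ t) := hx₀min hJ
        have hcge : c ≤ M - S₁ - S₂ t := by simp [hc]; linarith [hle0 t htI]
        have : m * c ≤ μ (S₂ t) * (M - S₁ - S₂ t) :=
          mul_le_mul hμge hcge (le_of_lt hcpos) (le_trans (le_of_lt hmpos) hμge)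
        nlinarith
    set T' : ℝ := (S₂0 - uS₂ + 1) / (m * c) with hT'
    have hmc : 0 < m * c := mul_pos hmpos hcpos
    have hT'pos : 0 < T' := div_pos (by linarith) hmc
    have h1 : G T' ≤ G 0 := hGanti self_mem_Ici (mem_Ici.mpr (le_of_lt hT'pos)) (le_of_lt hT'pos)
    have h2 : G 0 = S₂0 := by simp [hG, hinit]
    have h3 : m * c * T' = S₂0 - uS₂ + 1 := by
      rw [hT', mul_div_cancel₀]
      exact ne_of_gt hmc
    have : S₂ T' ≤ uS₂ - 1 := by
      have : S₂ T' + m * c * T' ≤ S₂0 := h2 ▸ h1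
      linarith [h3 ▸ this]
    have := hgt T' (le_of_lt hT'pos)
    linarith
  obtain ⟨T₀, hT₀, hST₀⟩ := hreach
  have hmem : uS₂ ∈ Icc (S₂ T₀) (S₂ 0) := ⟨hST₀, by rw [hinit]; exact le_of_lt huS₂'⟩
  obtain ⟨T, hTmem, hTval⟩ := intermediate_value_Icc' hT₀
    (contS.mono (Icc_subset_Ici_self)) hmem
  exact ⟨T, hTmem.1, hTval⟩
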